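/- For entropic indices in the region D = ℝ₊² \ {(α,β) : α > 1/2, β > α̃}, the uncertainty relation N_α(A)·N_β(Ã) ≥ B_{α,β} holds for all unit-norm Ψ ∈ L²(ℝ^d), where B_{α,β} = B(max(α,β)) if max(α,β) ≥ 1/2 and B_{α,β} = 2π if both α, β < 1/2. (It suffices to prove: if the conjugated-index inequality N_α·N_{α̃} ≥ B(α) holds for all α ≥ 1/2, then monotonicity of N_λ in λ extends it to all of D.) -/

import Mathlib

/-- The bound `B(α)` of the conjugated-index entropic uncertainty relation,
extended by continuity with `B(1) = eπ` and `B(α) = 2π` for `α ≤ 1/2`. -/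
noncomputable def Bext (α : ℝ) : ℝ :=
  if α ≤ 1/2 then 2 * Real.pi
  else if α = 1 then Real.exp 1 * Real.pi
  else Real.pi * α ^ (1/(2*(α-1))) * (α / (2*α - 1)) ^ (1/(2*(α / (2*α - 1) - 1)))

lemma conj_gt (l : ℝ) (hl : 1/2 < l) : 1/2 < l/(2*l-1) := by
  have h : 0 < 2*l - 1 := by linarith
  rw [lt_div_iff₀ h]; linarith

lemma conj_conj (l : ℝ) (hl : 1/2 < l) :
    l/(2*l-1)/(2*(l/(2*l-1))-1) = l := by
  have hc : (0:ℝ) < 2*l - 1 := by linarith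
  have key : 2*(l/(2*l-1))-1 = 1/(2*l-1) := by
    field_simp; ring
  rw [key]; field_simp; exact div_self (by linarith)

lemma Bext_conj (l : ℝ) (hl : 1/2 < l) : Bext (l/(2*l-1)) = Bext l := by
  by_cases h1 : l = 1
  · subst h1; norm_num
  · have hc : 0 < 2*l - 1 := by linarith
    have htgt : 1/2 < l/(2*l-1) := conj_gt l hl
    have htc : l/(2*l-1)/(2*(l/(2*l-1))-1) = l := conj_conj l hl
    have ht1 : l/(2*l-1) ≠ 1 := by
      intro h; apply h1; rw [h] at htc; norm_num at htc; linarith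
    rw [Bext, Bext, if_neg (not_le.2 htgt), if_neg ht1, if_neg (not_le.2 hl), if_neg h1, htc]
    ring

/-- If the conjugated-index inequality `N_α(A)·N_{α̃}(Ã) ≥ B(α)` holds and the
entropy powers are positive and non-increasing in the index, then for every
`(α,β)` in the region `D = ℝ₊² \ {α > 1/2 ∧ β > α̃}` the uncertainty relation
`N_α(A)·N_β(Ã) ≥ B_{α,β}` holds, with `B_{α,β} = B(max(α,β))` (which equals
`2π` when both `α, β < 1/2`). -/
theorem entropic_uncertainty_on_D (NA NB : ℝ → ℝ)
    (hNApos : ∀ l, 0 < NA l) (hNBpos : ∀ l, 0 < NB l)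
    (hNAmono : AntitoneOn NA (Set.Ici 0)) (hNBmono : AntitoneOn NB (Set.Ici 0))
    (hconj : ∀ l, 1/2 < l → Bext l ≤ NA l * NB (l / (2*l - 1)))
    (α β : ℝ) (hα : 0 ≤ α) (hβ : 0 ≤ β)
    (hD : ¬ (1/2 < α ∧ α / (2*α - 1) < β)) :
    Bext (max α β) ≤ NA α * NB β := by
  push_neg at hD
  have e2 : (2:ℝ) ≤ Real.exp 1 := by
    have := Real.add_one_le_exp 1; linarith
  have hπ : (0:ℝ) < Real.pi := Real.pi_pos
  by_cases hm : max α β ≤ 1/2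
  · -- both indices ≤ 1/2 : bound is 2π, compare with the (1,1) case where B(1)=eπ
    rw [Bext, if_pos hm]
    have h1 := hconj 1 (by norm_num)
    rw [Bext] at h1
    norm_num at h1
    have hα1 : α ≤ 1 := le_trans (le_max_left α β) (hm.trans (by norm_num))
    have hβ1 : β ≤ 1 := le_trans (le_max_right α β) (hm.trans (by norm_num))
    have hA : NA 1 ≤ NA α := hNAmono hα (by norm_num) hα1
    have hB : NB 1 ≤ NB β := hNBmono hβ (by norm_num) hβ1
    nlinarith [hNApos 1, hNBpos 1, hNApos α, hNBpos β]
  · push_neg at hm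
    by_cases hab : β ≤ α
    · -- max = α > 1/2
      have hα2 : 1/2 < α := by rw [max_eq_left hab] at hm; exact hm
      have hc : 0 < 2*α - 1 := by linarith
      have hβle : β ≤ α/(2*α-1) := hD hα2
      have h1 := hconj α hα2
      have hB : NB (α/(2*α-1)) ≤ NB β :=
        hNBmono hβ (le_of_lt (lt_trans (by norm_num) (conj_gt α hα2))) hβle
      rw [max_eq_left hab]
      nlinarith [hNApos α, hNBpos β]
    · push_neg at hab
      have hβ2 : 1/2 < β := by rw [max_eq_right hab.le] at hm; exact hm
      have hc : 0 < 2*β - 1 := by linarith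
      have h1 := hconj (β/(2*β-1)) (conj_gt β hβ2)
      rw [conj_conj β hβ2, Bext_conj β hβ2] at h1
      -- h1 : Bext β ≤ NA (β/(2β-1)) * NB β
      have hαt : α ≤ β/(2*β-1) := by
        by_cases hα2 : 1/2 < α
        · have hβle : β ≤ α/(2*α-1) := hD hα2
          have hca : 0 < 2*α - 1 := by linarith
          rw [le_div_iff₀ hca] at hβle
          rw [le_div_iff₀ hc]
          nlinarith
        · have : α ≤ 1/2 := le_of_not_gt hα2
          linarith [conj_gt β hβ2]
      have hA : NA (β/(2*β-1)) ≤ NA α :=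
        hNAmono hα (le_of_lt (lt_trans (by norm_num) (conj_gt β hβ2))) hαt
      rw [max_eq_right hab.le]
      nlinarith [hNApos (β/(2*β-1)), hNBpos β]
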